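/- For any A, B in the semigroup S of nonnegative matrices with columns containing positive entries, defining [A] := sup{d(A·x, A·y) : x, y ∈ X}, one has the submultiplicativity [AB] ≤ [A]·[B] and the contraction property d(A·x, A·y) ≤ [A]·d(x,y) for all x, y ∈ X. -/

import Mathlib

open Matrix BigOperators

/-- The ℓ¹ norm on `ℝ^d`. -/
def l1 {d : ℕ} (x : Fin d → ℝ) : ℝ := ∑ i, |x i|

/-- The semigroup `S` of nonnegative matrices each of whose columns contains a
positive entry. -/
def memS {d : ℕ} (A : Matrix (Fin d) (Fin d) ℝ) : Prop :=
  (∀ i j, 0 ≤ A i j) ∧ ∀ j, ∃ i, 0 < A i j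

/-- `m(x,y) = min { x_i / y_i : y_i > 0 }`. -/
noncomputable def mfun {d : ℕ} (x y : Fin d → ℝ) : ℝ :=
  ⨅ i : {i : Fin d // 0 < y i}, x i / y i

/-- The projective (Hilbert-type) distance on the simplex. -/
noncomputable def dH {d : ℕ} (x y : Fin d → ℝ) : ℝ :=
  (1 - mfun x y * mfun y x) / (1 + mfun x y * mfun y x)

/-- The projective action `A · x = Ax / |Ax|`. -/
noncomputable def projAct {d : ℕ} (A : Matrix (Fin d) (Fin d) ℝ) (x : Fin d → ℝ) :
    Fin d → ℝ :=
  (l1 (A.mulVec x))⁻¹ • A.mulVec x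

/-- The contraction coefficient `[A] = sup { d(A·x, A·y) : x, y ∈ X }`. -/
noncomputable def contrCoef {d : ℕ} (A : Matrix (Fin d) (Fin d) ℝ) : ℝ :=
  sSup {r : ℝ | ∃ x y : Fin d → ℝ, (∀ i, 0 ≤ x i) ∧ (∑ i, x i) = 1 ∧
    (∀ i, 0 ≤ y i) ∧ (∑ i, y i) = 1 ∧ r = dH (projAct A x) (projAct A y)}

namespace Stmt8Aux

variable {d : ℕ}

lemma exists_pos {x : Fin d → ℝ} (hx : ∀ i, 0 ≤ x i) (hs : ∑ i, x i = 1) :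
    ∃ i, 0 < x i := by
  by_contra h
  push_neg at h
  have : ∑ i, x i = 0 :=
    Finset.sum_eq_zero (fun i _ => le_antisymm (h i) (hx i))
  rw [this] at hs
  exact one_ne_zero hs.symm

lemma mfun_nonneg {x y : Fin d → ℝ} (hx : ∀ i, 0 ≤ x i) (hy : ∀ i, 0 ≤ y i) :
    0 ≤ mfun x y :=
  Real.iInf_nonneg (fun i => div_nonneg (hx i) (hy i))

lemma mfun_le {x y : Fin d → ℝ} (hx : ∀ i, 0 ≤ x i) (hy : ∀ i, 0 ≤ y i)
    {i : Fin d} (hi : 0 < y i) : mfun x y ≤ x i / y i := by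
  have hbdd : BddBelow (Set.range fun j : {j : Fin d // 0 < y j} => x j / y j) := by
    refine ⟨0, ?_⟩
    rintro r ⟨j, rfl⟩
    exact div_nonneg (hx j) (hy j)
  exact ciInf_le hbdd (⟨i, hi⟩ : {j : Fin d // 0 < y j})

lemma mfun_mul_le {x y : Fin d → ℝ} (hx : ∀ i, 0 ≤ x i) (hy : ∀ i, 0 ≤ y i)
    (i : Fin d) : mfun x y * y i ≤ x i := by
  rcases (hy i).lt_or_eq with hi | hi
  · have h := mfun_le hx hy hi
    calc mfun x y * y i ≤ (x i / y i) * y i :=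
          mul_le_mul_of_nonneg_right h hi.le
      _ = x i := div_mul_cancel₀ _ hi.ne'
  · rw [← hi, mul_zero]; exact hx i

lemma le_mfun {x y : Fin d → ℝ} {c : ℝ} (hne : ∃ i, 0 < y i)
    (h : ∀ i, 0 < y i → c ≤ x i / y i) : c ≤ mfun x y := by
  have : Nonempty {i : Fin d // 0 < y i} := ⟨⟨hne.choose, hne.choose_spec⟩⟩
  exact le_ciInf (fun i => h i i.2)

lemma mfun_le_one {x y : Fin d → ℝ} (hx : ∀ i, 0 ≤ x i) (hsx : ∑ i, x i = 1)
    (hy : ∀ i, 0 ≤ y i) (hsy : ∑ i, y i = 1) : mfun x y ≤ 1 := by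
  have h : mfun x y * ∑ i, y i ≤ ∑ i, x i := by
    rw [Finset.mul_sum]
    exact Finset.sum_le_sum (fun i _ => mfun_mul_le hx hy i)
  rw [hsx, hsy, mul_one] at h
  exact h

lemma mfun_self {x : Fin d → ℝ} (hne : ∃ i, 0 < x i) : mfun x x = 1 := by
  have : Nonempty {i : Fin d // 0 < x i} := ⟨⟨hne.choose, hne.choose_spec⟩⟩
  unfold mfun
  rw [show (fun i : {i : Fin d // 0 < x i} => x i / x i) = fun _ => (1:ℝ) from
    funext (fun i => div_self i.2.ne'), ciInf_const]

lemma dH_self {x : Fin d → ℝ} (hne : ∃ i, 0 < x i) : dH x x = 0 := by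
  unfold dH
  rw [mfun_self hne]; norm_num

lemma prod_le_one {x y : Fin d → ℝ} (hx : ∀ i, 0 ≤ x i) (hsx : ∑ i, x i = 1)
    (hy : ∀ i, 0 ≤ y i) (hsy : ∑ i, y i = 1) : mfun x y * mfun y x ≤ 1 := by
  have h1 := mfun_le_one hx hsx hy hsy
  have h2 := mfun_le_one hy hsy hx hsx
  have n1 := mfun_nonneg hx hy
  have n2 := mfun_nonneg hy hx
  nlinarith

lemma dH_nonneg {x y : Fin d → ℝ} (hx : ∀ i, 0 ≤ x i) (hsx : ∑ i, x i = 1)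
    (hy : ∀ i, 0 ≤ y i) (hsy : ∑ i, y i = 1) : 0 ≤ dH x y := by
  have h := prod_le_one hx hsx hy hsy
  have n1 := mfun_nonneg hx hy
  have n2 := mfun_nonneg hy hx
  have hp : (0:ℝ) ≤ mfun x y * mfun y x := mul_nonneg n1 n2
  exact div_nonneg (by linarith) (by linarith)

lemma dH_le_one {x y : Fin d → ℝ} (hx : ∀ i, 0 ≤ x i) (hy : ∀ i, 0 ≤ y i) :
    dH x y ≤ 1 := by
  have hp : (0:ℝ) ≤ mfun x y * mfun y x :=
    mul_nonneg (mfun_nonneg hx hy) (mfun_nonneg hy hx)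
  unfold dH
  rw [div_le_one (by linarith)]
  linarith

lemma mfun_smul_left {x y : Fin d → ℝ} {c : ℝ} (hc : 0 ≤ c) :
    mfun (c • x) y = c * mfun x y := by
  unfold mfun
  rw [Real.mul_iInf_of_nonneg hc]
  exact iInf_congr (fun i => by simp [Pi.smul_apply, smul_eq_mul, mul_div_assoc])

lemma mfun_smul_right {x y : Fin d → ℝ} {c : ℝ} (hx : ∀ i, 0 ≤ x i)
    (hy : ∀ i, 0 ≤ y i) (hey : ∃ i, 0 < y i) (hc : 0 < c) :
    mfun x (c • y) = c⁻¹ * mfun x y := by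
  have hcy : ∀ i, 0 ≤ (c • y) i := fun i => mul_nonneg hc.le (hy i)
  have hecy : ∃ i, 0 < (c • y) i := ⟨hey.choose, mul_pos hc hey.choose_spec⟩
  apply le_antisymm
  · rw [← mul_le_mul_iff_right₀ hc, ← mul_assoc, mul_inv_cancel₀ hc.ne', one_mul]
    apply le_mfun hey
    intro i hi
    have := mfun_le hx hcy (show 0 < (c • y) i from mul_pos hc hi)
    calc c * mfun x (c • y) ≤ c * (x i / (c • y) i) :=
          mul_le_mul_of_nonneg_left this hc.le
      _ = x i / y i := by
          simp only [Pi.smul_apply, smul_eq_mul]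
          field_simp
  · apply le_mfun hecy
    intro i hi
    have hyi : 0 < y i := by
      by_contra h
      push_neg at h
      have : (c • y) i ≤ 0 := mul_nonpos_of_nonneg_of_nonpos hc.le h
      linarith [hi]
    have := mfun_le hx hy hyi
    calc c⁻¹ * mfun x y ≤ c⁻¹ * (x i / y i) :=
          mul_le_mul_of_nonneg_left this (inv_nonneg.2 hc.le)
      _ = x i / (c • y) i := by
          simp only [Pi.smul_apply, smul_eq_mul]
          field_simp

lemma dH_smul {x y : Fin d → ℝ} {c c' : ℝ} (hx : ∀ i, 0 ≤ x i)
    (hy : ∀ i, 0 ≤ y i) (hex : ∃ i, 0 < x i) (hey : ∃ i, 0 < y i)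
    (hc : 0 < c) (hc' : 0 < c') : dH (c • x) (c' • y) = dH x y := by
  have h1 : mfun (c • x) (c' • y) = c * (c'⁻¹ * mfun x y) := by
    rw [mfun_smul_left hc.le, mfun_smul_right hx hy hey hc']
  have h2 : mfun (c' • y) (c • x) = c' * (c⁻¹ * mfun y x) := by
    rw [mfun_smul_left hc'.le, mfun_smul_right hy hx hex hc]
  unfold dH
  rw [h1, h2]
  have : c * (c'⁻¹ * mfun x y) * (c' * (c⁻¹ * mfun y x)) = mfun x y * mfun y x := by
    field_simp
  rw [this]

lemma mulVec_nonneg {A : Matrix (Fin d) (Fin d) ℝ} (hA : memS A)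
    {x : Fin d → ℝ} (hx : ∀ i, 0 ≤ x i) : ∀ i, 0 ≤ A.mulVec x i := by
  intro i
  simp only [Matrix.mulVec, dotProduct]
  exact Finset.sum_nonneg fun j _ => mul_nonneg (hA.1 i j) (hx j)

lemma mulVec_pos {A : Matrix (Fin d) (Fin d) ℝ} (hA : memS A)
    {x : Fin d → ℝ} (hx : ∀ i, 0 ≤ x i) (hex : ∃ j, 0 < x j) :
    ∃ i, 0 < A.mulVec x i := by
  obtain ⟨j, hj⟩ := hex
  obtain ⟨i, hi⟩ := hA.2 j
  refine ⟨i, ?_⟩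
  simp only [Matrix.mulVec, dotProduct]
  apply Finset.sum_pos' (fun k _ => mul_nonneg (hA.1 i k) (hx k))
  exact ⟨j, Finset.mem_univ j, mul_pos hi hj⟩

lemma l1_of_nonneg {x : Fin d → ℝ} (hx : ∀ i, 0 ≤ x i) : l1 x = ∑ i, x i :=
  Finset.sum_congr rfl (fun i _ => abs_of_nonneg (hx i))

lemma l1_pos {x : Fin d → ℝ} (hx : ∀ i, 0 ≤ x i) (hex : ∃ i, 0 < x i) :
    0 < l1 x := by
  obtain ⟨i, hi⟩ := hex
  unfold l1
  apply Finset.sum_pos' (fun j _ => abs_nonneg _)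
  exact ⟨i, Finset.mem_univ i, by rw [abs_of_pos hi]; exact hi⟩

lemma projAct_simplex {A : Matrix (Fin d) (Fin d) ℝ} (hA : memS A)
    {x : Fin d → ℝ} (hx : ∀ i, 0 ≤ x i) (hex : ∃ j, 0 < x j) :
    (∀ i, 0 ≤ projAct A x i) ∧ (∑ i, projAct A x i) = 1 := by
  have hw := mulVec_nonneg hA hx
  have hwe := mulVec_pos hA hx hex
  have hl := l1_pos hw hwe
  constructor
  · intro i
    exact mul_nonneg (inv_nonneg.2 hl.le) (hw i)
  · have : ∑ i, projAct A x i = (l1 (A.mulVec x))⁻¹ * ∑ i, A.mulVec x i := by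
      unfold projAct
      simp only [Pi.smul_apply, smul_eq_mul]
      rw [← Finset.mul_sum]
    rw [this, ← l1_of_nonneg hw, inv_mul_cancel₀ hl.ne']

lemma l1_smul {x : Fin d → ℝ} {c : ℝ} (hc : 0 ≤ c) : l1 (c • x) = c * l1 x := by
  unfold l1
  rw [Finset.mul_sum]
  exact Finset.sum_congr rfl (fun i _ => by
    simp [Pi.smul_apply, smul_eq_mul, abs_mul, abs_of_nonneg hc])

lemma projAct_smul {A : Matrix (Fin d) (Fin d) ℝ} {x : Fin d → ℝ} {c : ℝ}
    (hc : 0 < c) : projAct A (c • x) = projAct A x := by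
  unfold projAct
  rw [Matrix.mulVec_smul, l1_smul hc.le, smul_smul]
  congr 1
  rw [mul_inv, mul_comm c⁻¹, mul_assoc, inv_mul_cancel₀ hc.ne', mul_one]


lemma key {U V : Fin d → ℝ} (hU : ∀ i, 0 ≤ U i) (hV : ∀ i, 0 ≤ V i)
    (hUe : ∃ i, 0 < U i) (hVe : ∃ i, 0 < V i)
    (hMM : mfun U V * mfun V U ≤ 1)
    {p q m1 m2 : ℝ} (hp : 0 < p) (hq : 0 < q) (hm1 : 0 < m1) (hm2 : 0 < m2)
    (hmm : m1 * m2 < 1) :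
    dH (p • U + (m1*q) • V) ((m2*p) • U + q • V)
      ≤ ((1 - m1*m2)/(1+m1*m2)) * dH U V := by
  set M := mfun U V with hM_def
  set M' := mfun V U with hM'_def
  have hM : 0 ≤ M := mfun_nonneg hU hV
  have hM' : 0 ≤ M' := mfun_nonneg hV hU
  have hMV : ∀ i, M * V i ≤ U i := mfun_mul_le hU hV
  have hM'U : ∀ i, M' * U i ≤ V i := mfun_mul_le hV hU
  set X' := p • U + (m1*q) • V with hX'def
  set Y' := (m2*p) • U + q • V with hY'def
  have hX'i : ∀ i, X' i = p * U i + (m1*q) * V i := fun i => rfl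
  have hY'i : ∀ i, Y' i = (m2*p) * U i + q * V i := fun i => rfl
  have hX'n : ∀ i, 0 ≤ X' i := fun i => by
    rw [hX'i i]
    exact add_nonneg (mul_nonneg hp.le (hU i))
      (mul_nonneg (mul_nonneg hm1.le hq.le) (hV i))
  have hY'n : ∀ i, 0 ≤ Y' i := fun i => by
    rw [hY'i i]
    exact add_nonneg (mul_nonneg (mul_nonneg hm2.le hp.le) (hU i))
      (mul_nonneg hq.le (hV i))
  have hX'e : ∃ i, 0 < X' i := by
    obtain ⟨i, hi⟩ := hUe
    exact ⟨i, by
      rw [hX'i i]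
      exact add_pos_of_pos_of_nonneg (mul_pos hp hi)
        (mul_nonneg (mul_nonneg hm1.le hq.le) (hV i))⟩
  have hY'e : ∃ i, 0 < Y' i := by
    obtain ⟨i, hi⟩ := hVe
    exact ⟨i, by
      rw [hY'i i]
      exact add_pos_of_nonneg_of_pos
        (mul_nonneg (mul_nonneg hm2.le hp.le) (hU i)) (mul_pos hq hi)⟩
  have hden1 : 0 < (m2*p)*M + q :=
    add_pos_of_nonneg_of_pos (mul_nonneg (by positivity) hM) hq
  have hden2 : 0 < p + (m1*q)*M' :=
    add_pos_of_pos_of_nonneg hp (mul_nonneg (by positivity) hM')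
  have hB1n : 0 ≤ (p*M + m1*q)/((m2*p)*M + q) :=
    div_nonneg (by nlinarith) hden1.le
  have hB2n : 0 ≤ ((m2*p) + q*M')/(p + (m1*q)*M') :=
    div_nonneg (by nlinarith) hden2.le
  have hB1le : (p*M + m1*q)/((m2*p)*M + q) ≤ mfun X' Y' := by
    apply le_mfun hY'e
    intro i hi
    rw [div_le_div_iff₀ hden1 hi]
    rw [hX'i i, hY'i i]
    have key1 : 0 ≤ p*q*(1 - m1*m2)*(U i - M*V i) :=
      mul_nonneg (mul_nonneg (by positivity) (by linarith)) (by linarith [hMV i])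
    rw [hY'i i] at hi
    nlinarith [key1]
  have hB2le : ((m2*p) + q*M')/(p + (m1*q)*M') ≤ mfun Y' X' := by
    apply le_mfun hX'e
    intro i hi
    rw [div_le_div_iff₀ hden2 hi]
    rw [hX'i i, hY'i i]
    have key2 : 0 ≤ p*q*(1 - m1*m2)*(V i - M'*U i) :=
      mul_nonneg (mul_nonneg (by positivity) (by linarith)) (by linarith [hM'U i])
    nlinarith [key2]
  have hPn : 0 ≤ mfun X' Y' * mfun Y' X' :=
    mul_nonneg (mfun_nonneg hX'n hY'n) (mfun_nonneg hY'n hX'n)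
  have hQP : (p*M + m1*q)/((m2*p)*M + q) * (((m2*p) + q*M')/(p + (m1*q)*M'))
      ≤ mfun X' Y' * mfun Y' X' :=
    mul_le_mul hB1le hB2le hB2n (le_trans hB1n hB1le)
  have hBB : (p*M + m1*q)/((m2*p)*M + q) * (((m2*p) + q*M')/(p + (m1*q)*M'))
      = ((p*M + m1*q)*((m2*p) + q*M')) / (((m2*p)*M + q)*(p + (m1*q)*M')) :=
    div_mul_div_comm _ _ _ _
  set N := (p*M + m1*q)*((m2*p) + q*M') with hNdef
  set D := ((m2*p)*M + q)*(p + (m1*q)*M') with hDdef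
  have hD : 0 < D := mul_pos hden1 hden2
  have hN : 0 ≤ N := by rw [hNdef]; positivity
  have hQn : 0 ≤ N/D := div_nonneg hN hD.le
  have hDN : 0 < D + N := by linarith
  rw [hBB] at hQP
  have step1 : dH X' Y' ≤ (1 - N/D)/(1 + N/D) := by
    unfold dH
    rw [div_le_div_iff₀ (by linarith) (by linarith)]
    nlinarith [hQP]
  have step2 : (1 - N/D)/(1 + N/D) = (D - N)/(D + N) := by
    have h1 : (0:ℝ) < 1 + N/D := by linarith
    rw [div_eq_div_iff h1.ne' hDN.ne']
    field_simp
  have hUVprod : 0 < (1+m1*m2)*(1+M*M') := by nlinarith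
  have step3 : (D - N)/(D + N) ≤ ((1-m1*m2)*(1-M*M'))/((1+m1*m2)*(1+M*M')) := by
    rw [div_le_div_iff₀ hDN hUVprod]
    have hid : (1-m1*m2)*(1-M*M')*(D+N) - (D-N)*((1+m1*m2)*(1+M*M'))
        = (1-m1*m2)*(1-M*M')*(2*m2*p^2*M + 2*m1*q^2*M') := by
      rw [hNdef, hDdef]; ring
    have hpos : 0 ≤ (1-m1*m2)*(1-M*M')*(2*m2*p^2*M + 2*m1*q^2*M') := by
      apply mul_nonneg (mul_nonneg (by linarith) (by linarith))
      positivity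
    linarith [hid, hpos]
  have hdUV : dH U V = (1-M*M')/(1+M*M') := rfl
  calc dH X' Y' ≤ (1 - N/D)/(1 + N/D) := step1
    _ = (D - N)/(D + N) := step2
    _ ≤ ((1-m1*m2)*(1-M*M'))/((1+m1*m2)*(1+M*M')) := step3
    _ = ((1 - m1*m2)/(1+m1*m2)) * dH U V := by
        rw [hdUV, div_mul_div_comm]

lemma normalize_simplex {w : Fin d → ℝ} (hw : ∀ i, 0 ≤ w i) (hwe : ∃ i, 0 < w i) :
    (∀ i, 0 ≤ ((l1 w)⁻¹ • w) i) ∧ ∑ i, ((l1 w)⁻¹ • w) i = 1 := by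
  have hl := l1_pos hw hwe
  constructor
  · intro i; exact mul_nonneg (inv_nonneg.2 hl.le) (hw i)
  · simp only [Pi.smul_apply, smul_eq_mul]
    rw [← Finset.mul_sum, ← l1_of_nonneg hw, inv_mul_cancel₀ hl.ne']

lemma bdd {A : Matrix (Fin d) (Fin d) ℝ} (hA : memS A) :
    BddAbove {r : ℝ | ∃ x y : Fin d → ℝ, (∀ i, 0 ≤ x i) ∧ (∑ i, x i) = 1 ∧
      (∀ i, 0 ≤ y i) ∧ (∑ i, y i) = 1 ∧ r = dH (projAct A x) (projAct A y)} := by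
  refine ⟨1, ?_⟩
  rintro r ⟨x, y, hx, hsx, hy, hsy, rfl⟩
  exact dH_le_one (projAct_simplex hA hx (exists_pos hx hsx)).1
    (projAct_simplex hA hy (exists_pos hy hsy)).1

lemma smul_projAct (A : Matrix (Fin d) (Fin d) ℝ) (w : Fin d → ℝ)
    (hw : 0 < l1 (A.mulVec w)) :
    (l1 (A.mulVec w)) • projAct A w = A.mulVec w := by
  unfold projAct
  rw [smul_smul, mul_inv_cancel₀ hw.ne', one_smul]

lemma contraction {A : Matrix (Fin d) (Fin d) ℝ} (hA : memS A)
    (x y : Fin d → ℝ) (hx : ∀ i, 0 ≤ x i) (hsx : ∑ i, x i = 1)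
    (hy : ∀ i, 0 ≤ y i) (hsy : ∑ i, y i = 1) :
    dH (projAct A x) (projAct A y) ≤ contrCoef A * dH x y := by
  have hbdd := bdd hA
  have hxe := exists_pos hx hsx
  have hye := exists_pos hy hsy
  have hXs := projAct_simplex hA hx hxe
  have hYs := projAct_simplex hA hy hye
  have hle : dH (projAct A x) (projAct A y) ≤ contrCoef A :=
    le_csSup hbdd ⟨x, y, hx, hsx, hy, hsy, rfl⟩
  have hcA0 : 0 ≤ contrCoef A :=
    le_csSup hbdd ⟨x, x, hx, hsx, hx, hsx,
      (dH_self (exists_pos hXs.1 hXs.2)).symm⟩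
  by_cases hxy : x = y
  · subst hxy
    rw [dH_self hxe, mul_zero, dH_self (exists_pos hXs.1 hXs.2)]
  set m1 := mfun x y with hm1_def
  set m2 := mfun y x with hm2_def
  have hm1n : 0 ≤ m1 := mfun_nonneg hx hy
  have hm2n : 0 ≤ m2 := mfun_nonneg hy hx
  by_cases h0 : m1 * m2 = 0
  · have h1 : dH x y = 1 := by
      unfold dH
      rw [← hm1_def, ← hm2_def, h0]
      norm_num
    rw [h1, mul_one]
    exact hle
  have hm1 : 0 < m1 := lt_of_le_of_ne hm1n (fun h => h0 (by rw [← h, zero_mul]))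
  have hm2 : 0 < m2 := lt_of_le_of_ne hm2n (fun h => h0 (by rw [← h, mul_zero]))
  have h1le : m1 ≤ 1 := mfun_le_one hx hsx hy hsy
  have h2le : m2 ≤ 1 := mfun_le_one hy hsy hx hsx
  have hprodle : m1 * m2 ≤ 1 := prod_le_one hx hsx hy hsy
  have hmm : m1 * m2 < 1 := by
    rcases lt_or_eq_of_le hprodle with h | h
    · exact h
    exfalso
    have hm1' : m1 = 1 := by nlinarith
    have hm2' : m2 = 1 := by nlinarith
    apply hxy
    funext i
    have hxi := mfun_mul_le hx hy i
    have hyi := mfun_mul_le hy hx i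
    rw [← hm1_def, hm1', one_mul] at hxi
    rw [← hm2_def, hm2', one_mul] at hyi
    linarith
  have hc1 : 0 < 1 - m1 * m2 := by linarith
  set u := x - m1 • y with hu_def
  set v := y - m2 • x with hv_def
  have hui : ∀ i, u i = x i - m1 * y i := fun i => rfl
  have hvi : ∀ i, v i = y i - m2 * x i := fun i => rfl
  have hu : ∀ i, 0 ≤ u i := fun i => by
    rw [hui i, sub_nonneg]; exact mfun_mul_le hx hy i
  have hv : ∀ i, 0 ≤ v i := fun i => by
    rw [hvi i, sub_nonneg]; exact mfun_mul_le hy hx i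
  have hue : ∃ i, 0 < u i := by
    by_contra h
    push_neg at h
    have hz : ∀ i, x i = m1 * y i := fun i => by
      have h1 := le_antisymm (h i) (hu i)
      rw [hui i] at h1
      linarith
    have hsum : (1:ℝ) = m1 := by
      calc (1:ℝ) = ∑ i, x i := hsx.symm
        _ = ∑ i, m1 * y i := Finset.sum_congr rfl (fun i _ => hz i)
        _ = m1 := by rw [← Finset.mul_sum, hsy, mul_one]
    apply hxy
    funext i
    rw [hz i, ← hsum, one_mul]
  have hve : ∃ i, 0 < v i := by
    by_contra h
    push_neg at h
    have hz : ∀ i, y i = m2 * x i := fun i => by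
      have h1 := le_antisymm (h i) (hv i)
      rw [hvi i] at h1
      linarith
    have hsum : (1:ℝ) = m2 := by
      calc (1:ℝ) = ∑ i, y i := hsy.symm
        _ = ∑ i, m2 * x i := Finset.sum_congr rfl (fun i _ => hz i)
        _ = m2 := by rw [← Finset.mul_sum, hsx, mul_one]
    apply hxy
    funext i
    rw [hz i, ← hsum, one_mul]
  have hWxn := mulVec_nonneg hA hx
  have hWyn := mulVec_nonneg hA hy
  have hWxe := mulVec_pos hA hx hxe
  have hWye := mulVec_pos hA hy hye
  have hWun := mulVec_nonneg hA hu
  have hWvn := mulVec_nonneg hA hv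
  have hWue := mulVec_pos hA hu hue
  have hWve := mulVec_pos hA hv hve
  have hpu : 0 < l1 (A.mulVec u) := l1_pos hWun hWue
  have hpv : 0 < l1 (A.mulVec v) := l1_pos hWvn hWve
  have hxid : (1 - m1 * m2) • x = u + m1 • v := by
    funext i
    simp only [Pi.add_apply, Pi.smul_apply, smul_eq_mul, hui i, hvi i]
    ring
  have hyid : (1 - m1 * m2) • y = v + m2 • u := by
    funext i
    simp only [Pi.add_apply, Pi.smul_apply, smul_eq_mul, hui i, hvi i]
    ring
  have hWx : (1 - m1 * m2) • A.mulVec x = A.mulVec u + m1 • A.mulVec v := by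
    rw [← Matrix.mulVec_smul, hxid, Matrix.mulVec_add, Matrix.mulVec_smul]
  have hWy : (1 - m1 * m2) • A.mulVec y = A.mulVec v + m2 • A.mulVec u := by
    rw [← Matrix.mulVec_smul, hyid, Matrix.mulVec_add, Matrix.mulVec_smul]
  have hUs := projAct_simplex hA hu hue
  have hVs := projAct_simplex hA hv hve
  have hS1 : A.mulVec u + m1 • A.mulVec v
      = (l1 (A.mulVec u)) • projAct A u
        + (m1 * l1 (A.mulVec v)) • projAct A v := by
    rw [smul_projAct A u hpu, ← smul_smul, smul_projAct A v hpv]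
  have hS2 : A.mulVec v + m2 • A.mulVec u
      = (m2 * l1 (A.mulVec u)) • projAct A u
        + (l1 (A.mulVec v)) • projAct A v := by
    rw [smul_projAct A v hpv, ← smul_smul, smul_projAct A u hpu, add_comm]
  have e1 : dH (projAct A x) (projAct A y) = dH (A.mulVec x) (A.mulVec y) := by
    unfold projAct
    exact dH_smul hWxn hWyn hWxe hWye (inv_pos.2 (l1_pos hWxn hWxe))
      (inv_pos.2 (l1_pos hWyn hWye))
  have e2 : dH (A.mulVec x) (A.mulVec y)
      = dH ((1 - m1 * m2) • A.mulVec x) ((1 - m1 * m2) • A.mulVec y) :=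
    (dH_smul hWxn hWyn hWxe hWye hc1 hc1).symm
  rw [e1, e2, hWx, hWy, hS1, hS2]
  have hMMle : mfun (projAct A u) (projAct A v) * mfun (projAct A v) (projAct A u) ≤ 1 :=
    prod_le_one hUs.1 hUs.2 hVs.1 hVs.2
  have hkey := key hUs.1 hVs.1 (exists_pos hUs.1 hUs.2) (exists_pos hVs.1 hVs.2)
    hMMle hpu hpv hm1 hm2 hmm
  have hUVle : dH (projAct A u) (projAct A v) ≤ contrCoef A := by
    apply le_csSup hbdd
    have hnu := normalize_simplex hu hue
    have hnv := normalize_simplex hv hve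
    refine ⟨(l1 u)⁻¹ • u, (l1 v)⁻¹ • v, hnu.1, hnu.2, hnv.1, hnv.2, ?_⟩
    rw [projAct_smul (inv_pos.2 (l1_pos hu hue)),
      projAct_smul (inv_pos.2 (l1_pos hv hve))]
  have hdxy : dH x y = (1 - m1 * m2) / (1 + m1 * m2) := rfl
  have hdxy0 : 0 ≤ dH x y := dH_nonneg hx hsx hy hsy
  calc dH ((l1 (A.mulVec u)) • projAct A u + (m1 * l1 (A.mulVec v)) • projAct A v)
        ((m2 * l1 (A.mulVec u)) • projAct A u + (l1 (A.mulVec v)) • projAct A v)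
      ≤ ((1 - m1 * m2) / (1 + m1 * m2)) * dH (projAct A u) (projAct A v) := hkey
    _ = dH x y * dH (projAct A u) (projAct A v) := by rw [hdxy]
    _ ≤ dH x y * contrCoef A := mul_le_mul_of_nonneg_left hUVle hdxy0
    _ = contrCoef A * dH x y := mul_comm _ _

lemma projAct_comp {A B : Matrix (Fin d) (Fin d) ℝ} (hB : memS B)
    {x : Fin d → ℝ} (hx : ∀ i, 0 ≤ x i) (hex : ∃ i, 0 < x i) :
    projAct (A * B) x = projAct A (projAct B x) := by
  have hwn := mulVec_nonneg hB hx
  have hwe := mulVec_pos hB hx hex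
  have hl := l1_pos hwn hwe
  unfold projAct
  rw [Matrix.mulVec_smul, ← Matrix.mulVec_mulVec, l1_smul (inv_nonneg.2 hl.le),
    smul_smul]
  congr 1
  rw [mul_inv, inv_inv, mul_comm (l1 (B.mulVec x)), mul_assoc,
    mul_inv_cancel₀ hl.ne', mul_one]

end Stmt8Aux

theorem stmt8 {d : ℕ} (hd : 2 ≤ d) (A B : Matrix (Fin d) (Fin d) ℝ)
    (hA : memS A) (hB : memS B) :
    contrCoef (A * B) ≤ contrCoef A * contrCoef B ∧
      ∀ x y : Fin d → ℝ, (∀ i, 0 ≤ x i) → (∑ i, x i) = 1 →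
        (∀ i, 0 ≤ y i) → (∑ i, y i) = 1 →
        dH (projAct A x) (projAct A y) ≤ contrCoef A * dH x y := by
  have hd0 : 0 < d := by omega
  set e : Fin d → ℝ := Pi.single ⟨0, hd0⟩ 1 with he_def
  have hen : ∀ i, 0 ≤ e i := by
    intro i
    rw [he_def]
    rcases eq_or_ne i ⟨0, hd0⟩ with h | h
    · rw [h, Pi.single_eq_same]; norm_num
    · rw [Pi.single_eq_of_ne h]
  have hes : ∑ i, e i = 1 := by
    rw [he_def]
    simp [Finset.sum_pi_single']
  have hcA0 : 0 ≤ contrCoef A :=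
    le_csSup (Stmt8Aux.bdd hA) ⟨e, e, hen, hes, hen, hes,
      (Stmt8Aux.dH_self (Stmt8Aux.exists_pos
        (Stmt8Aux.projAct_simplex hA hen (Stmt8Aux.exists_pos hen hes)).1
        (Stmt8Aux.projAct_simplex hA hen (Stmt8Aux.exists_pos hen hes)).2)).symm⟩
  have hcB0 : 0 ≤ contrCoef B :=
    le_csSup (Stmt8Aux.bdd hB) ⟨e, e, hen, hes, hen, hes,
      (Stmt8Aux.dH_self (Stmt8Aux.exists_pos
        (Stmt8Aux.projAct_simplex hB hen (Stmt8Aux.exists_pos hen hes)).1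
        (Stmt8Aux.projAct_simplex hB hen (Stmt8Aux.exists_pos hen hes)).2)).symm⟩
  constructor
  · apply Real.sSup_le _ (mul_nonneg hcA0 hcB0)
    rintro r ⟨x, y, hx, hsx, hy, hsy, rfl⟩
    have hxe := Stmt8Aux.exists_pos hx hsx
    have hye := Stmt8Aux.exists_pos hy hsy
    rw [Stmt8Aux.projAct_comp hB hx hxe, Stmt8Aux.projAct_comp hB hy hye]
    have hXs := Stmt8Aux.projAct_simplex hB hx hxe
    have hYs := Stmt8Aux.projAct_simplex hB hy hye
    have h1 := Stmt8Aux.contraction hA (projAct B x) (projAct B y)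
      hXs.1 hXs.2 hYs.1 hYs.2
    have h2 : dH (projAct B x) (projAct B y) ≤ contrCoef B :=
      le_csSup (Stmt8Aux.bdd hB) ⟨x, y, hx, hsx, hy, hsy, rfl⟩
    calc dH (projAct A (projAct B x)) (projAct A (projAct B y))
        ≤ contrCoef A * dH (projAct B x) (projAct B y) := h1
      _ ≤ contrCoef A * contrCoef B := mul_le_mul_of_nonneg_left h2 hcA0
  · intro x y hx hsx hy hsy
    exact Stmt8Aux.contraction hA x y hx hsx hy hsy
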